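/- arXiv:2207.11813 — 3 statements merged into one kernel-verified Lean document; each statement's English description precedes it below -/
import Mathlib

section
/- For every real number c > 0, the set of real numbers α for which there exists a positive integer k with 0 < dist(kα, ℤ) < e^{-ck} is an open and dense subset of ℝ. -/
open Metric Set

lemma infDist_int_add (m : ℤ) (t : ℝ) (ht0 : 0 ≤ t) (ht : t ≤ 1/2) :
    Metric.infDist ((m : ℝ) + t) (Set.range ((↑) : ℤ → ℝ)) = t := by
  have hne : (Set.range ((↑) : ℤ → ℝ)).Nonempty := ⟨(m : ℝ), ⟨m, rfl⟩⟩
  refine le_antisymm ?_ ?_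
  · have hm : (m : ℝ) ∈ Set.range ((↑) : ℤ → ℝ) := Set.mem_range_self m
    have := Metric.infDist_le_dist_of_mem (x := (m : ℝ) + t) hm
    simpa [Real.dist_eq, abs_of_nonneg ht0] using this
  · by_contra h
    push_neg at h
    rw [Metric.infDist_lt_iff hne] at h
    obtain ⟨y, ⟨n, rfl⟩, hy⟩ := h
    rw [Real.dist_eq, abs_lt] at hy
    rcases le_or_gt n m with hnm | hnm
    · have : (n : ℝ) ≤ (m : ℝ) := by exact_mod_cast hnm
      linarith [hy.2]
    · have : (m : ℝ) + 1 ≤ (n : ℝ) := by exact_mod_cast hnm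
      linarith [hy.1]

/-- For every `c > 0`, the set of real numbers `α` for which there exists a positive
integer `k` with `0 < dist (k • α, ℤ) < e ^ (-c * k)` is open and dense in `ℝ`.
Here the distance from `x` to `ℤ` is `Metric.infDist x (Set.range ((↑) : ℤ → ℝ))`. -/
theorem exp_liouville_approx_set_isOpen_and_dense (c : ℝ) (hc : 0 < c) :
    IsOpen {α : ℝ | ∃ k : ℕ, 0 < k ∧
        0 < Metric.infDist ((k : ℝ) * α) (Set.range ((↑) : ℤ → ℝ)) ∧
        Metric.infDist ((k : ℝ) * α) (Set.range ((↑) : ℤ → ℝ)) < Real.exp (-(c * k))} ∧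
    Dense {α : ℝ | ∃ k : ℕ, 0 < k ∧
        0 < Metric.infDist ((k : ℝ) * α) (Set.range ((↑) : ℤ → ℝ)) ∧
        Metric.infDist ((k : ℝ) * α) (Set.range ((↑) : ℤ → ℝ)) < Real.exp (-(c * k))} := by
  set S := Set.range ((↑) : ℤ → ℝ)
  constructor
  · have : {α : ℝ | ∃ k : ℕ, 0 < k ∧ 0 < Metric.infDist ((k : ℝ) * α) S ∧
        Metric.infDist ((k : ℝ) * α) S < Real.exp (-(c * k))} =
        ⋃ k : ℕ, ⋃ (_ : 0 < k),
          (fun α : ℝ => Metric.infDist ((k : ℝ) * α) S) ⁻¹'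
            (Set.Ioo 0 (Real.exp (-(c * k)))) := by
      ext α; simp [Set.mem_Ioo]; tauto
    rw [this]
    refine isOpen_iUnion fun k => isOpen_iUnion fun _ => ?_
    have hcont : Continuous fun α : ℝ => Metric.infDist ((k : ℝ) * α) S :=
      (Metric.continuous_infDist_pt S).comp (continuous_const.mul continuous_id)
    exact isOpen_Ioo.preimage hcont
  · rw [Metric.dense_iff]
    intro α ε hε
    obtain ⟨n, hn⟩ := exists_nat_one_div_lt hε
    set k : ℕ := n + 1
    have hk0 : 0 < k := Nat.succ_pos n
    have hkR : (0 : ℝ) < k := by exact_mod_cast hk0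
    set t : ℝ := min (Real.exp (-(c * k)) / 2) (1/4)
    have ht0 : 0 < t := lt_min (by positivity) (by norm_num)
    have ht2 : t ≤ 1/2 := le_trans (min_le_right _ _) (by norm_num)
    have htlt : t < Real.exp (-(c * k)) :=
      lt_of_le_of_lt (min_le_left _ _) (by linarith [Real.exp_pos (-(c * k))])
    set m : ℤ := ⌊(k : ℝ) * α⌋
    set β : ℝ := ((m : ℝ) + t) / k
    have hkβ : (k : ℝ) * β = (m : ℝ) + t := by
      rw [show β = ((m : ℝ) + t) / k from rfl, mul_comm, div_mul_cancel₀ _ hkR.ne']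
    have hdist : Metric.infDist ((k : ℝ) * β) S = t := by
      rw [hkβ]; exact infDist_int_add m t ht0.le ht2
    refine ⟨β, ?_, ⟨k, hk0, by rw [hdist]; exact ht0, by rw [hdist]; exact htlt⟩⟩
    rw [Metric.mem_ball, Real.dist_eq]
    have hfl1 : (m : ℝ) ≤ (k : ℝ) * α := Int.floor_le _
    have hfl2 : (k : ℝ) * α < (m : ℝ) + 1 := Int.lt_floor_add_one _
    have hβα : β - α = ((m : ℝ) + t - (k : ℝ) * α) / k := by
      rw [show β = ((m : ℝ) + t) / k from rfl, sub_div, mul_div_cancel_left₀ α hkR.ne']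
    have h1 : |β - α| < 1 / k := by
      rw [abs_lt, hβα]
      constructor
      · rw [neg_div' , div_lt_div_iff₀ hkR hkR]
        nlinarith
      · rw [div_lt_div_iff₀ hkR hkR]
        nlinarith
    calc |β - α| < 1 / k := h1
      _ ≤ 1 / (n + 1 : ℝ) := by norm_num [k]
      _ < ε := hn
end

section
/- The set 𝓛* of exponentially Liouville real numbers, i.e. the set of α ∈ ℝ such that for every c > 0 there exists a positive integer k with 0 < dist(kα, ℤ) < e^{-ck}, is a residual (comeagre) subset of ℝ: it contains a countable intersection of open dense sets. -/
lemma infDist_int_eq (x : ℝ) :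
    Metric.infDist x (Set.range ((↑) : ℤ → ℝ)) = |x - round x| := by
  apply le_antisymm
  · have hm : ((round x : ℤ) : ℝ) ∈ Set.range ((↑) : ℤ → ℝ) := ⟨round x, rfl⟩
    have := Metric.infDist_le_dist_of_mem (x := x) hm
    simpa [Real.dist_eq] using this
  · by_contra h
    push_neg at h
    have hne : (Set.range ((↑) : ℤ → ℝ)).Nonempty := ⟨(0 : ℝ), 0, by simp⟩
    obtain ⟨y, hy, hlt⟩ := (Metric.infDist_lt_iff hne).mp h
    obtain ⟨z, rfl⟩ := hy
    exact absurd hlt (not_lt.mpr ((round_le x z).trans_eq (Real.dist_eq x z).symm))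

/-- The set `𝓛*` of exponentially Liouville real numbers, i.e. the set of `α : ℝ` such that
for every `c > 0` there is a positive integer `k` with `0 < dist (k • α, ℤ) < e ^ (-c * k)`,
is residual (comeagre) in `ℝ`. Here the distance from `x` to `ℤ` is
`Metric.infDist x (Set.range ((↑) : ℤ → ℝ))`. -/
theorem exp_liouville_residual :
    {α : ℝ | ∀ c : ℝ, 0 < c → ∃ k : ℕ, 0 < k ∧
        0 < Metric.infDist ((k : ℝ) * α) (Set.range ((↑) : ℤ → ℝ)) ∧
        Metric.infDist ((k : ℝ) * α) (Set.range ((↑) : ℤ → ℝ)) < Real.exp (-(c * k))}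
      ∈ residual ℝ := by
  set D : ℝ → ℝ := fun x => Metric.infDist x (Set.range ((↑) : ℤ → ℝ)) with hD
  set U : ℕ → Set ℝ := fun n =>
    {α : ℝ | ∃ k : ℕ, 0 < k ∧ 0 < D ((k : ℝ) * α) ∧
      D ((k : ℝ) * α) < Real.exp (-(((n : ℝ) + 1) * k))} with hU
  have hcont : Continuous D := by
    exact (Metric.continuous_infDist_pt _)
  have hopen : ∀ n, IsOpen (U n) := by
    intro n
    have : U n = ⋃ k : ℕ, {α : ℝ | 0 < k ∧ 0 < D ((k : ℝ) * α) ∧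
        D ((k : ℝ) * α) < Real.exp (-(((n : ℝ) + 1) * k))} := by
      ext α; simp [hU]
    rw [this]
    apply isOpen_iUnion
    intro k
    rcases Nat.eq_zero_or_pos k with hk | hk
    · simp only [hk]
      by_cases h : (0:ℝ) < D 0 ∧ D 0 < Real.exp (-(((n:ℝ)+1) * 0))
      · convert isOpen_empty using 1
        ext α; simp
      · convert isOpen_empty using 1
        ext α; simp only [Set.mem_setOf_eq, Nat.cast_zero, zero_mul]
        tauto
    · have hc : Continuous fun α : ℝ => D ((k : ℝ) * α) :=
        hcont.comp (continuous_const.mul continuous_id)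
      have : {α : ℝ | 0 < k ∧ 0 < D ((k : ℝ) * α) ∧
          D ((k : ℝ) * α) < Real.exp (-(((n : ℝ) + 1) * k))} =
          {α : ℝ | 0 < D ((k : ℝ) * α)} ∩
          {α : ℝ | D ((k : ℝ) * α) < Real.exp (-(((n : ℝ) + 1) * k))} := by
        ext α
        simp only [Set.mem_setOf_eq, Set.mem_inter_iff, hk, true_and]
      rw [this]
      exact (isOpen_lt continuous_const hc).inter (isOpen_lt hc continuous_const)
  have hdense : ∀ n, Dense (U n) := by
    intro n
    rw [Metric.dense_iff]
    intro x r hr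
    -- choose k with 2/k < r
    obtain ⟨k, hk⟩ := exists_nat_gt (2 / r)
    have hk0 : 0 < k := by
      have h2r : (0:ℝ) < 2 / r := by positivity
      exact_mod_cast Nat.cast_pos.mp (h2r.trans hk)
    have hkR : (0:ℝ) < k := by exact_mod_cast hk0
    set δ : ℝ := Real.exp (-(((n : ℝ) + 1) * k)) / 2 with hδ
    have hδ0 : 0 < δ := by positivity
    have hδhalf : δ < 1 / 2 := by
      have : Real.exp (-(((n : ℝ) + 1) * k)) < 1 := by
        rw [Real.exp_lt_one_iff]
        have : (0:ℝ) < ((n : ℝ) + 1) * k := by positivity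
        linarith
      rw [hδ]
      linarith
    set β : ℝ := (↑(⌊(k : ℝ) * x⌋) + δ) / k with hβ
    refine ⟨β, ?_, ?_⟩
    · rw [Metric.mem_ball, Real.dist_eq]
      have h1 : (k:ℝ) * x - 1 < ↑(⌊(k : ℝ) * x⌋) := Int.sub_one_lt_floor _
      have h2 : (↑(⌊(k : ℝ) * x⌋) : ℝ) ≤ (k:ℝ) * x := Int.floor_le _
      have hsub : β - x = ((↑(⌊(k : ℝ) * x⌋) + δ) - (k:ℝ) * x) / k := by
        rw [hβ]; field_simp
      rw [hsub, abs_div, abs_of_pos hkR]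
      have habs : |(↑(⌊(k : ℝ) * x⌋) + δ) - (k:ℝ) * x| < 2 := by
        rw [abs_lt]
        constructor <;> nlinarith
      rw [div_lt_iff₀ hkR]
      have h2r : 2 / r < k := hk
      have : 2 < r * k := by
        rw [div_lt_iff₀ hr] at h2r
        linarith
      linarith
    · refine ⟨k, hk0, ?_, ?_⟩ <;>
      · have hkβ : (k : ℝ) * β = ↑(⌊(k : ℝ) * x⌋) + δ := by
          rw [hβ, mul_div_cancel₀ _ (ne_of_gt hkR)]
        have hround : round ((↑(⌊(k : ℝ) * x⌋) : ℝ) + δ) = ⌊(k : ℝ) * x⌋ := by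
          have h0 : round δ = 0 := round_eq_zero_iff.mpr ⟨by linarith, by linarith⟩
          rw [add_comm, round_add_intCast, h0, zero_add]
        have : D ((k : ℝ) * β) = δ := by
          simp only [hD]
          rw [hkβ, infDist_int_eq, hround]
          simp [abs_of_pos hδ0]
        rw [this]
        · first
          | exact hδ0
          | (rw [hδ]; linarith [Real.exp_pos (-(((n : ℝ) + 1) * k))])
  have hsub : (⋂ n, U n) ⊆ {α : ℝ | ∀ c : ℝ, 0 < c → ∃ k : ℕ, 0 < k ∧
      0 < D ((k : ℝ) * α) ∧ D ((k : ℝ) * α) < Real.exp (-(c * k))} := by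
    intro α hα c hc
    obtain ⟨n, hn⟩ := exists_nat_gt c
    have hαn := Set.mem_iInter.mp hα n
    obtain ⟨k, hk, h1, h2⟩ := hαn
    refine ⟨k, hk, h1, lt_of_lt_of_le h2 ?_⟩
    apply Real.exp_le_exp.mpr
    have hkR : (0:ℝ) ≤ k := Nat.cast_nonneg k
    have : c ≤ (n:ℝ) + 1 := by linarith
    nlinarith
  exact Filter.mem_of_superset
    (countable_iInter_mem.mpr (fun n => residual_of_dense_open (hopen n) (hdense n))) hsub
end

section
/- Fix a positive integer k. The set of vectors α = (α₁, …, α_k) ∈ ℝ^k such that for every c > 0 there exists a positive integer n with 0 < max_{1 ≤ i ≤ k} dist(nα_i, ℤ) < e^{-cn} is a residual (comeagre) subset of ℝ^k. -/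
open Metric Set

private lemma intSet_infDist_eq (m : ℤ) (t : ℝ) (h0 : 0 ≤ t) (h1 : t ≤ 1/2) :
    Metric.infDist ((m : ℝ) + t) (Set.range ((↑) : ℤ → ℝ)) = t := by
  refine le_antisymm ?_ ?_
  · have := Metric.infDist_le_dist_of_mem (x := (m : ℝ) + t)
      (Set.mem_range_self (f := ((↑) : ℤ → ℝ)) m)
    simpa [Real.dist_eq, abs_of_nonneg h0] using this
  · by_contra h
    push_neg at h
    rw [Metric.infDist_lt_iff ⟨(m : ℝ), Set.mem_range_self m⟩] at h
    obtain ⟨y, ⟨j, rfl⟩, hy⟩ := h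
    rw [Real.dist_eq] at hy
    rcases le_or_gt (j : ℝ) (m : ℝ) with hj | hj
    · have : t ≤ (m : ℝ) + t - j := by linarith
      have := le_abs_self ((m : ℝ) + t - j)
      linarith
    · have hj' : (m : ℤ) + 1 ≤ j := by exact_mod_cast hj
      have hj'' : (m : ℝ) + 1 ≤ j := by exact_mod_cast hj'
      have : t ≤ |(m : ℝ) + t - j| := by
        rw [abs_sub_comm]
        have h2 : t ≤ (j : ℝ) - ((m : ℝ) + t) := by linarith
        have := le_abs_self ((j : ℝ) - ((m : ℝ) + t))
        linarith
      linarith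

/-- For a fixed positive integer `k`, the set of vectors `α ∈ ℝ^k` such that for every
`c > 0` there exists a positive integer `n` with
`0 < max_{1 ≤ i ≤ k} dist (n • α i, ℤ) < e ^ (-c * n)` is residual (comeagre) in `ℝ^k`.
The maximum over the finitely many coordinates is expressed as a supremum over `Fin k`,
and the distance from `x : ℝ` to `ℤ` is `Metric.infDist x (Set.range ((↑) : ℤ → ℝ))`. -/
theorem exp_liouville_residual_torus (k : ℕ) (hk : 0 < k) :
    {α : Fin k → ℝ | ∀ c : ℝ, 0 < c → ∃ n : ℕ, 0 < n ∧
        0 < (⨆ i : Fin k, Metric.infDist ((n : ℝ) * α i) (Set.range ((↑) : ℤ → ℝ))) ∧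
        (⨆ i : Fin k, Metric.infDist ((n : ℝ) * α i) (Set.range ((↑) : ℤ → ℝ)))
          < Real.exp (-(c * n))}
      ∈ residual (Fin k → ℝ) := by
  haveI : Nonempty (Fin k) := ⟨⟨0, hk⟩⟩
  set Z : Set ℝ := Set.range ((↑) : ℤ → ℝ) with hZ
  set D : ℕ → (Fin k → ℝ) → ℝ := fun n α => ⨆ i : Fin k, Metric.infDist ((n : ℝ) * α i) Z
    with hD
  -- basic facts
  have hbdd : ∀ n (α : Fin k → ℝ),
      BddAbove (Set.range fun i : Fin k => Metric.infDist ((n : ℝ) * α i) Z) :=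
    fun n α => (Set.finite_range _).bddAbove
  set U : ℝ → Set (Fin k → ℝ) := fun c =>
    {α | ∃ n : ℕ, 0 < n ∧ 0 < D n α ∧ D n α < Real.exp (-(c * n))} with hU
  -- each U c is open
  have hopen : ∀ c : ℝ, IsOpen (U c) := by
    intro c
    have : U c = ⋃ n : ℕ, ⋃ _ : 0 < n,
        ((⋃ i : Fin k, {α : Fin k → ℝ | 0 < Metric.infDist ((n : ℝ) * α i) Z}) ∩
          (⋂ i : Fin k, {α : Fin k → ℝ |
            Metric.infDist ((n : ℝ) * α i) Z < Real.exp (-(c * n))})) := by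
      ext α
      simp only [hU, Set.mem_setOf_eq, Set.mem_iUnion, Set.mem_inter_iff, Set.mem_iInter]
      constructor
      · rintro ⟨n, hn, hpos, hlt⟩
        refine ⟨n, hn, ?_, ?_⟩
        · rw [hD] at hpos
          rw [lt_ciSup_iff (hbdd n α)] at hpos
          exact hpos
        · intro i
          refine lt_of_le_of_lt ?_ hlt
          exact le_ciSup (hbdd n α) i
      · rintro ⟨n, hn, ⟨i, hi⟩, hall⟩
        refine ⟨n, hn, ?_, ?_⟩
        · rw [hD, lt_ciSup_iff (hbdd n α)]
          exact ⟨i, hi⟩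
        · obtain ⟨j, hj⟩ := exists_eq_ciSup_of_finite
            (f := fun i : Fin k => Metric.infDist ((n : ℝ) * α i) Z)
          show (⨆ i : Fin k, Metric.infDist ((n : ℝ) * α i) Z) < Real.exp (-(c * n))
          rw [← hj]
          exact hall j
    rw [this]
    refine isOpen_iUnion fun n => isOpen_iUnion fun _ => IsOpen.inter ?_ ?_
    · refine isOpen_iUnion fun i => ?_
      have hc : Continuous fun α : Fin k → ℝ => Metric.infDist ((n : ℝ) * α i) Z :=
        (Metric.continuous_infDist_pt Z).comp (continuous_const.mul (continuous_apply i))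
      exact isOpen_lt continuous_const hc
    · refine isOpen_iInter_of_finite fun i => ?_
      have hc : Continuous fun α : Fin k → ℝ => Metric.infDist ((n : ℝ) * α i) Z :=
        (Metric.continuous_infDist_pt Z).comp (continuous_const.mul (continuous_apply i))
      exact isOpen_lt hc continuous_const
  -- each U c with c > 0 is dense
  have hdense : ∀ c : ℝ, 0 < c → Dense (U c) := by
    intro c hc
    rw [Metric.dense_iff]
    intro α r hr
    -- choose a large denominator q
    obtain ⟨q, hq⟩ := exists_nat_gt (2 / r)
    have hq1 : 1 ≤ q := by
      by_contra h
      push_neg at h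
      interval_cases q
      · simp at hq
        have := div_pos (by norm_num : (0:ℝ) < 2) hr
        linarith
    have hqR : (0 : ℝ) < q := by exact_mod_cast hq1
    set E : ℝ := Real.exp (-(c * q)) with hE
    have hE0 : 0 < E := Real.exp_pos _
    have hE1 : E ≤ 1 := by
      rw [hE, Real.exp_le_one_iff]
      have : 0 ≤ c * q := le_of_lt (mul_pos hc hqR)
      linarith
    set δ : ℝ := min (r / 2) (E / (2 * q)) with hδ
    have hδ0 : 0 < δ := lt_min (by linarith) (div_pos hE0 (by linarith))
    have hδr : δ ≤ r / 2 := min_le_left _ _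
    have hδE : δ ≤ E / (2 * q) := min_le_right _ _
    have hqδE : q * δ ≤ E / 2 := by
      have := mul_le_mul_of_nonneg_left hδE (le_of_lt hqR)
      calc (q : ℝ) * δ ≤ q * (E / (2 * q)) := this
        _ = E / 2 := by field_simp
    have hqδhalf : (q : ℝ) * δ ≤ 1 / 2 := le_trans hqδE (by linarith)
    set β : Fin k → ℝ := fun i => (⌊(q : ℝ) * α i⌋ : ℝ) / q + δ with hβ
    refine ⟨β, ?_, ?_⟩
    · -- β is in the ball around α
      rw [Metric.mem_ball, dist_pi_lt_iff hr]
      intro i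
      rw [Real.dist_eq]
      have h1 : |(⌊(q : ℝ) * α i⌋ : ℝ) / q - α i| < 1 / q := by
        have key : (⌊(q : ℝ) * α i⌋ : ℝ) / q - α i = ((⌊(q : ℝ) * α i⌋ : ℝ) - q * α i) / q := by
          field_simp
        have habs : |(⌊(q : ℝ) * α i⌋ : ℝ) - q * α i| < 1 := by
          rw [abs_lt]
          constructor
          · linarith [Int.lt_floor_add_one ((q : ℝ) * α i)]
          · linarith [Int.floor_le ((q : ℝ) * α i)]
        rw [key, abs_div, abs_of_pos hqR]
        gcongr
      have h2 : (1 : ℝ) / q < r / 2 := by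
        rw [div_lt_iff₀ hqR]
        rw [div_lt_iff₀ hr] at hq
        linarith [hq]
      calc |β i - α i| = |((⌊(q : ℝ) * α i⌋ : ℝ) / q - α i) + δ| := by
            rw [hβ]; ring_nf
        _ ≤ |(⌊(q : ℝ) * α i⌋ : ℝ) / q - α i| + |δ| := abs_add_le _ _
        _ < 1 / q + δ := by
            rw [abs_of_pos hδ0]
            exact add_lt_add_left h1 δ
        _ < r := by linarith
    · -- β is in U c, with witness n = q
      have hval : ∀ i : Fin k, Metric.infDist ((q : ℝ) * β i) Z = q * δ := by
        intro i
        have : (q : ℝ) * β i = (⌊(q : ℝ) * α i⌋ : ℝ) + q * δ := by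
          rw [hβ]; field_simp
        rw [this, hZ]
        exact intSet_infDist_eq _ _ (by positivity) hqδhalf
      have hDval : D q β = q * δ := by
        rw [hD]
        simp only [hval]
        exact ciSup_const
      refine ⟨q, hq1, ?_, ?_⟩
      · rw [hDval]; positivity
      · rw [hDval]
        calc (q : ℝ) * δ ≤ E / 2 := hqδE
          _ < E := by linarith
  -- conclude via countable intersection of dense open sets
  rw [mem_residual_iff]
  refine ⟨Set.range (fun m : ℕ => U (m + 1)), ?_, ?_, Set.countable_range _, ?_⟩
  · rintro t ⟨m, rfl⟩; exact hopen _
  · rintro t ⟨m, rfl⟩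
    exact hdense _ (by positivity)
  · intro α hα c hc
    simp only [Set.sInter_range, Set.mem_iInter] at hα
    obtain ⟨m, hm⟩ := exists_nat_gt c
    obtain ⟨n, hn, hpos, hlt⟩ := hα m
    refine ⟨n, hn, hpos, lt_of_lt_of_le hlt ?_⟩
    rw [Real.exp_le_exp]
    have hn' : (0 : ℝ) < n := by exact_mod_cast hn
    have : c * n ≤ ((m : ℝ) + 1) * n := by nlinarith
    linarith
end
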